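/- Let D be a double Boolean algebra. A pair (A,B) is a clopen object oriented protoconcept of K^T_pr(D) satisfying (A,B)⊓(A,B) = (A,B) or (A,B)⊔(A,B) = (A,B) if and only if (A,B) = (F_{¬x}, I_x) for some x ∈ D_p. Moreover, if (A,B)⊓(A,B) = (A,B) then x can be chosen in D_⊓, and if (A,B)⊔(A,B) = (A,B) then x can be chosen in D_⊔. -/

import Mathlib

universe u v

/-- A double Boolean algebra (dBa). -/
structure DBA (D : Type u) where
  sup : D → D → D
  inf : D → D → D
  neg : D → D
  dneg : D → D
  top : D
  bot : D
  ax1a : ∀ x y, inf (inf x x) y = inf x y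
  ax2a : ∀ x y, inf x y = inf y x
  ax3a : ∀ x y z, inf x (inf y z) = inf (inf x y) z
  ax4a : ∀ x, neg (inf x x) = neg x
  ax5a : ∀ x y, inf x (sup x y) = inf x x
  ax6a : ∀ x y z, inf x (neg (inf (neg y) (neg z))) =
      neg (inf (neg (inf x y)) (neg (inf x z)))
  ax7a : ∀ x y, inf x (neg (inf (neg x) (neg y))) = inf x x
  ax8a : ∀ x y, neg (neg (inf x y)) = inf x y
  ax9a : ∀ x, inf x (neg x) = bot
  ax10a : neg bot = inf top top
  ax11a : neg top = bot
  ax1b : ∀ x y, sup (sup x x) y = sup x y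
  ax2b : ∀ x y, sup x y = sup y x
  ax3b : ∀ x y z, sup x (sup y z) = sup (sup x y) z
  ax4b : ∀ x, dneg (sup x x) = dneg x
  ax5b : ∀ x y, sup x (inf x y) = sup x x
  ax6b : ∀ x y z, sup x (dneg (sup (dneg y) (dneg z))) =
      dneg (sup (dneg (sup x y)) (dneg (sup x z)))
  ax7b : ∀ x y, sup x (dneg (sup (dneg x) (dneg y))) = sup x x
  ax8b : ∀ x y, dneg (dneg (sup x y)) = sup x y
  ax9b : ∀ x, sup x (dneg x) = top
  ax10b : dneg top = sup bot bot
  ax11b : dneg bot = top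
  ax12 : ∀ x, sup (inf x x) (inf x x) = inf (sup x x) (sup x x)

namespace DBA

variable {D : Type u} {E : Type v}

/-- x ∨ y := ¬(¬x ⊓ ¬y) -/
def vee (A : DBA D) (x y : D) : D := A.neg (A.inf (A.neg x) (A.neg y))

/-- x ∧ y := ⌟(⌟x ⊔ ⌟y) -/
def wedge (A : DBA D) (x y : D) : D := A.dneg (A.sup (A.dneg x) (A.dneg y))

/-- The quasi-order ⊑. -/
def le (A : DBA D) (x y : D) : Prop := A.inf x y = A.inf x x ∧ A.sup x y = A.sup y y

def IsFilter (A : DBA D) (F : Set D) : Prop :=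
  (∀ x ∈ F, ∀ y ∈ F, A.inf x y ∈ F) ∧ ∀ x ∈ F, ∀ z, A.le x z → z ∈ F

def IsIdeal (A : DBA D) (I : Set D) : Prop :=
  (∀ x ∈ I, ∀ y ∈ I, A.sup x y ∈ I) ∧ ∀ x ∈ I, ∀ z, A.le z x → z ∈ I

def IsPrimaryFilter (A : DBA D) (F : Set D) : Prop :=
  A.IsFilter F ∧ F ≠ Set.univ ∧ ∀ x, x ∈ F ∨ A.neg x ∈ F

def IsPrimaryIdeal (A : DBA D) (I : Set D) : Prop :=
  A.IsIdeal I ∧ I ≠ Set.univ ∧ ∀ x, x ∈ I ∨ A.dneg x ∈ I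

def Pure (A : DBA D) : Prop := ∀ x, A.inf x x = x ∨ A.sup x x = x

def Contextual (A : DBA D) : Prop := ∀ x y, A.le x y → A.le y x → x = y

def FullyContextual (A : DBA D) : Prop :=
  A.Contextual ∧
    ∀ y x, A.inf y y = y → A.sup x x = x → A.sup y y = A.inf x x →
      ∃! z, A.inf z z = y ∧ A.sup z z = x

/-- D_p = D_⊓ ∪ D_⊔ -/
def Dp (A : DBA D) : Set D := {x | A.inf x x = x} ∪ {x | A.sup x x = x}

def IsHom (A : DBA D) (B : DBA E) (h : D → E) : Prop :=
  (∀ x y, h (A.inf x y) = B.inf (h x) (h y)) ∧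
  (∀ x y, h (A.sup x y) = B.sup (h x) (h y)) ∧
  (∀ x, h (A.neg x) = B.neg (h x)) ∧
  (∀ x, h (A.dneg x) = B.dneg (h x)) ∧
  h A.top = B.top ∧ h A.bot = B.bot

def IsHomOn (A : DBA D) (B : DBA E) (S : Set D) (h : D → E) : Prop :=
  (∀ x ∈ S, ∀ y ∈ S, h (A.inf x y) = B.inf (h x) (h y)) ∧
  (∀ x ∈ S, ∀ y ∈ S, h (A.sup x y) = B.sup (h x) (h y)) ∧
  (∀ x ∈ S, h (A.neg x) = B.neg (h x)) ∧
  (∀ x ∈ S, h (A.dneg x) = B.dneg (h x)) ∧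
  h A.top = B.top ∧ h A.bot = B.bot

end DBA

section FCA

variable {G : Type u} {M : Type v}

/-- B^◇ -/
def odia (R : G → M → Prop) (B : Set M) : Set G := {g | ∃ m ∈ B, R g m}
/-- B^□ -/
def obox (R : G → M → Prop) (B : Set M) : Set G := {g | ∀ m, R g m → m ∈ B}
/-- A^◆ -/
def obdia (R : G → M → Prop) (A : Set G) : Set M := {m | ∃ g ∈ A, R g m}
/-- A^■ -/
def obbox (R : G → M → Prop) (A : Set G) : Set M := {m | ∀ g, R g m → g ∈ A}

def pinf (R : G → M → Prop) (p q : Set G × Set M) : Set G × Set M :=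
  (p.1 ∪ q.1, obbox R (p.1 ∪ q.1))
def psup (R : G → M → Prop) (p q : Set G × Set M) : Set G × Set M :=
  (odia R (p.2 ∩ q.2), p.2 ∩ q.2)
def pneg (R : G → M → Prop) (p : Set G × Set M) : Set G × Set M :=
  (p.1ᶜ, obbox R p.1ᶜ)
def pdneg (R : G → M → Prop) (p : Set G × Set M) : Set G × Set M :=
  (odia R p.2ᶜ, p.2ᶜ)
def ptop : Set G × Set M := (∅, ∅)
def pbot : Set G × Set M := (Set.univ, Set.univ)
/-- quasi-order on pairs: (A,B) ⊑ (C,D) iff C ⊆ A and D ⊆ B -/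
def ple (p q : Set G × Set M) : Prop := q.1 ⊆ p.1 ∧ q.2 ⊆ p.2

/-- object oriented protoconcept -/
def IsProto (R : G → M → Prop) (p : Set G × Set M) : Prop :=
  odia R (obbox R p.1) = odia R p.2
/-- object oriented semiconcept -/
def IsSemi (R : G → M → Prop) (p : Set G × Set M) : Prop :=
  obbox R p.1 = p.2 ∨ odia R p.2 = p.1

/-- continuity of the relation R -/
def ContRel [TopologicalSpace G] [TopologicalSpace M] (R : G → M → Prop) : Prop :=
  ∀ O : Set M, IsOpen O → IsOpen (odia R O) ∧ IsOpen (obox R O)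
/-- continuity of the converse relation R⁻¹ -/
def ContRelInv [TopologicalSpace G] [TopologicalSpace M] (R : G → M → Prop) : Prop :=
  ∀ O : Set G, IsOpen O → IsOpen (obdia R O) ∧ IsOpen (obbox R O)

def IsClopenProto [TopologicalSpace G] [TopologicalSpace M] (R : G → M → Prop)
    (p : Set G × Set M) : Prop :=
  IsProto R p ∧ IsClopen p.1 ∧ IsClopen p.2

def IsClopenSemi [TopologicalSpace G] [TopologicalSpace M] (R : G → M → Prop)
    (p : Set G × Set M) : Prop :=
  IsSemi R p ∧ IsClopen p.1 ∧ IsClopen p.2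

def pmap {G' : Type*} {M' : Type*} (α : G → G') (β : M → M') (p : Set G' × Set M') :
    Set G × Set M := (α ⁻¹' p.1, β ⁻¹' p.2)

end FCA

section StoneDBA

variable {D : Type u}

/-- the set of primary filters of a dBa, as a type -/
def PrimF (A : DBA D) : Type u := {F : Set D // A.IsPrimaryFilter F}
/-- the set of primary ideals of a dBa, as a type -/
def PrimI (A : DBA D) : Type u := {I : Set D // A.IsPrimaryIdeal I}
/-- F ∇ I iff F ∩ I = ∅ -/
def nabla (A : DBA D) : PrimF A → PrimI A → Prop := fun F I => F.val ∩ I.val = ∅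
/-- F_x -/
def Fset (A : DBA D) (x : D) : Set (PrimF A) := {F | x ∈ F.val}
/-- I_x -/
def Iset (A : DBA D) (x : D) : Set (PrimI A) := {I | x ∈ I.val}

/-- the topology T on primary filters, with the F_x as a subbase of closed sets -/
def filtTop (A : DBA D) : TopologicalSpace (PrimF A) :=
  TopologicalSpace.generateFrom {U | ∃ x : D, U = (Fset A x)ᶜ}
/-- the topology J on primary ideals, with the I_x as a subbase of closed sets -/
def idlTop (A : DBA D) : TopologicalSpace (PrimI A) :=
  TopologicalSpace.generateFrom {U | ∃ x : D, U = (Iset A x)ᶜ}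

/-- the map h(x) := (F_{¬x}, I_x) -/
def protoEmb (A : DBA D) (x : D) : Set (PrimF A) × Set (PrimI A) :=
  (Fset A (A.neg x), Iset A x)

end StoneDBA

section SemiPrim

variable {G : Type u} {M : Type v} [TopologicalSpace G] [TopologicalSpace M]

/-- a primary filter of the dBa of clopen object oriented semiconcepts -/
def IsSemiPrimFilter (R : G → M → Prop) (F : Set (Set G × Set M)) : Prop :=
  (∀ p ∈ F, IsClopenSemi R p) ∧
  (∀ p ∈ F, ∀ q ∈ F, pinf R p q ∈ F) ∧
  (∀ p ∈ F, ∀ z, IsClopenSemi R z → ple p z → z ∈ F) ∧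
  F ≠ {p | IsClopenSemi R p} ∧
  (∀ p, IsClopenSemi R p → (p ∈ F ∨ pneg R p ∈ F))

/-- a primary ideal of the dBa of clopen object oriented semiconcepts -/
def IsSemiPrimIdeal (R : G → M → Prop) (I : Set (Set G × Set M)) : Prop :=
  (∀ p ∈ I, IsClopenSemi R p) ∧
  (∀ p ∈ I, ∀ q ∈ I, psup R p q ∈ I) ∧
  (∀ p ∈ I, ∀ z, IsClopenSemi R z → ple z p → z ∈ I) ∧
  I ≠ {p | IsClopenSemi R p} ∧
  (∀ p, IsClopenSemi R p → (p ∈ I ∨ pdneg R p ∈ I))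

def SemiPF (R : G → M → Prop) := {F : Set (Set G × Set M) // IsSemiPrimFilter R F}
def SemiPI (R : G → M → Prop) := {I : Set (Set G × Set M) // IsSemiPrimIdeal R I}

def semiPFTop (R : G → M → Prop) : TopologicalSpace (SemiPF R) :=
  TopologicalSpace.generateFrom
    {U | ∃ p, IsClopenSemi R p ∧ U = {F : SemiPF R | p ∈ F.val}ᶜ}
def semiPITop (R : G → M → Prop) : TopologicalSpace (SemiPI R) :=
  TopologicalSpace.generateFrom
    {U | ∃ p, IsClopenSemi R p ∧ U = {I : SemiPI R | p ∈ I.val}ᶜ}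

end SemiPrim

section Stmt15Aux

open Set

namespace DBA

variable {D : Type u} (A : DBA D)

instance instAssocInf : Std.Associative A.inf := ⟨fun a b c => (A.ax3a a b c).symm⟩
instance instCommInf : Std.Commutative A.inf := ⟨A.ax2a⟩
instance instAssocSup : Std.Associative A.sup := ⟨fun a b c => (A.ax3b a b c).symm⟩
instance instCommSup : Std.Commutative A.sup := ⟨A.ax2b⟩

/-- The dual double Boolean algebra. -/
def op : DBA D where
  sup := A.inf
  inf := A.sup
  neg := A.dneg
  dneg := A.neg
  top := A.bot
  bot := A.top
  ax1a := A.ax1b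
  ax2a := A.ax2b
  ax3a := A.ax3b
  ax4a := A.ax4b
  ax5a := A.ax5b
  ax6a := A.ax6b
  ax7a := A.ax7b
  ax8a := A.ax8b
  ax9a := A.ax9b
  ax10a := A.ax10b
  ax11a := A.ax11b
  ax1b := A.ax1a
  ax2b := A.ax2a
  ax3b := A.ax3a
  ax4b := A.ax4a
  ax5b := A.ax5a
  ax6b := A.ax6a
  ax7b := A.ax7a
  ax8b := A.ax8a
  ax9b := A.ax9a
  ax10b := A.ax10a
  ax11b := A.ax11a
  ax12 := fun x => (A.ax12 x).symm

theorem op_le {x y : D} : A.op.le x y ↔ A.le y x := by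
  constructor
  · rintro ⟨h1, h2⟩
    exact ⟨by rw [A.ax2a y x]; exact h2, by rw [A.ax2b y x]; exact h1⟩
  · rintro ⟨h1, h2⟩
    exact ⟨by show A.sup x y = A.sup x x; rw [A.ax2b x y]; exact h2,
           by show A.inf x y = A.inf y y; rw [A.ax2a x y]; exact h1⟩

theorem inf_idem2 (x y : D) : A.inf (A.inf x y) (A.inf x y) = A.inf x y := by
  have h : A.inf (A.inf x y) (A.inf x y) = A.inf (A.inf x x) (A.inf y y) := by ac_rfl
  rw [h, A.ax1a, A.ax2a, A.ax1a, A.ax2a]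

theorem sup_idem2 (x y : D) : A.sup (A.sup x y) (A.sup x y) = A.sup x y :=
  inf_idem2 A.op x y

theorem le_refl (x : D) : A.le x x := ⟨rfl, rfl⟩

theorem le_trans {x y z : D} (h1 : A.le x y) (h2 : A.le y z) : A.le x z := by
  obtain ⟨m1, j1⟩ := h1; obtain ⟨m2, j2⟩ := h2
  constructor
  · calc A.inf x z = A.inf (A.inf x x) z := by rw [A.ax1a]
    _ = A.inf (A.inf x y) z := by rw [m1]
    _ = A.inf x (A.inf y z) := (A.ax3a x y z).symm
    _ = A.inf x (A.inf y y) := by rw [m2]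
    _ = A.inf (A.inf x y) y := A.ax3a x y y
    _ = A.inf (A.inf x x) y := by rw [m1]
    _ = A.inf x y := A.ax1a x y
    _ = A.inf x x := m1
  · calc A.sup x z = A.sup z x := A.ax2b x z
    _ = A.sup (A.sup z z) x := by rw [A.ax1b]
    _ = A.sup (A.sup y z) x := by rw [j2]
    _ = A.sup y (A.sup z x) := (A.ax3b y z x).symm
    _ = A.sup y (A.sup x z) := by rw [A.ax2b z x]
    _ = A.sup (A.sup y x) z := A.ax3b y x z
    _ = A.sup (A.sup x y) z := by rw [A.ax2b y x]
    _ = A.sup (A.sup y y) z := by rw [j1]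
    _ = A.sup y z := A.ax1b y z
    _ = A.sup z z := j2

theorem le_of_inf_eq {x y : D} (h : A.inf x y = x) : A.le x y := by
  constructor
  · have m : A.inf x x = A.inf x y := by
      conv_lhs => rw [← h]
      rw [A.inf_idem2]
    exact m.symm
  · calc A.sup x y = A.sup (A.inf y x) y := by rw [A.ax2a y x, h]
    _ = A.sup y (A.inf y x) := A.ax2b _ _
    _ = A.sup y y := A.ax5b y x

theorem le_of_sup_eq {x y : D} (h : A.sup x y = y) : A.le x y := by
  constructor
  · calc A.inf x y = A.inf x (A.sup x y) := by rw [h]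
    _ = A.inf x x := A.ax5a x y
  · calc A.sup x y = A.sup (A.sup x y) (A.sup x y) := (A.sup_idem2 x y).symm
    _ = A.sup y y := by rw [h]

theorem inf_le_left (x y : D) : A.le (A.inf x y) x := by
  apply A.le_of_inf_eq
  have h1 : A.inf (A.inf x y) x = A.inf (A.inf x x) y := by ac_rfl
  rw [h1, A.ax1a]

theorem inf_le_right (x y : D) : A.le (A.inf x y) y := by
  rw [A.ax2a]; exact A.inf_le_left y x

theorem le_sup_left (x y : D) : A.le x (A.sup x y) := by
  apply A.le_of_sup_eq
  rw [A.ax3b, A.ax1b]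

theorem le_sup_right (x y : D) : A.le y (A.sup x y) := by
  rw [A.ax2b]; exact A.le_sup_left y x

theorem le_inf {c x y : D} (hc : A.inf c c = c) (h1 : A.le c x) (h2 : A.le c y) :
    A.le c (A.inf x y) := by
  apply A.le_of_inf_eq
  calc A.inf c (A.inf x y) = A.inf (A.inf c x) y := A.ax3a c x y
  _ = A.inf (A.inf c c) y := by rw [h1.1]
  _ = A.inf c y := A.ax1a c y
  _ = A.inf c c := h2.1
  _ = c := hc

theorem inf_top (x : D) : A.inf x A.top = A.inf x x := by
  rw [← A.ax9b x, A.ax5a]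

theorem inf_bot (x : D) : A.inf x A.bot = A.bot := by
  rw [← A.ax9a x, A.ax3a, A.ax1a]

theorem sup_bot (x : D) : A.sup x A.bot = A.sup x x := by
  rw [← A.ax9a x, A.ax5b]

theorem sup_top (x : D) : A.sup x A.top = A.top := by
  rw [← A.ax9b x, A.ax3b, A.ax1b]

theorem bot_le (x : D) : A.le A.bot x := by
  constructor
  · rw [A.ax2a, A.inf_bot, A.inf_bot]
  · rw [A.ax2b, A.sup_bot]

theorem le_top (x : D) : A.le x A.top := by
  constructor
  · exact A.inf_top x
  · rw [A.sup_top, A.sup_top]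

theorem eq_bot_of_le_bot {c : D} (hc : A.inf c c = c) (h : A.le c A.bot) : c = A.bot := by
  obtain ⟨m, _⟩ := h
  rw [A.inf_bot, hc] at m
  exact m.symm

theorem neg_neg (x : D) : A.neg (A.neg x) = A.inf x x := by
  rw [← A.ax4a x, A.ax8a]

theorem neg_idem (x : D) : A.inf (A.neg x) (A.neg x) = A.neg x := by
  calc A.inf (A.neg x) (A.neg x)
      = A.neg (A.neg (A.inf (A.neg x) (A.neg x))) := (A.ax8a _ _).symm
  _ = A.neg (A.neg (A.neg x)) := by rw [A.ax4a (A.neg x)]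
  _ = A.neg (A.inf x x) := by rw [A.neg_neg x]
  _ = A.neg x := A.ax4a x

theorem dneg_dneg (x : D) : A.dneg (A.dneg x) = A.sup x x := neg_neg A.op x

theorem dneg_idem (x : D) : A.sup (A.dneg x) (A.dneg x) = A.dneg x := neg_idem A.op x

theorem vee_bot_bot : A.vee A.bot A.bot = A.bot := by
  show A.neg (A.inf (A.neg A.bot) (A.neg A.bot)) = A.bot
  rw [A.ax4a, A.neg_neg, A.inf_bot]

theorem inf_vee (x y z : D) :
    A.inf x (A.vee y z) = A.vee (A.inf x y) (A.inf x z) := A.ax6a x y z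

theorem inf_vee_negself (z x : D) : A.inf z (A.vee x (A.neg x)) = A.inf z z := by
  show A.inf z (A.neg (A.inf (A.neg x) (A.neg (A.neg x)))) = A.inf z z
  rw [A.ax9a (A.neg x), A.ax10a, A.ax3a, A.inf_top, A.inf_top, A.inf_idem2]

theorem vee_le {a b z : D} (h1 : A.inf a z = a) (h2 : A.inf b z = b) :
    A.le (A.vee a b) z := by
  apply A.le_of_inf_eq
  have key : A.inf z (A.vee a b) = A.vee a b := by
    rw [A.inf_vee, A.ax2a z a, A.ax2a z b, h1, h2]
  rw [A.ax2a]; exact key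

theorem filter_eq_univ {F : Set D} (hF : A.IsFilter F) (h : A.bot ∈ F) : F = Set.univ :=
  Set.eq_univ_of_forall fun z => hF.2 A.bot h z (A.bot_le z)

theorem bot_not_mem {F : Set D} (hF : A.IsPrimaryFilter F) : A.bot ∉ F :=
  fun h => hF.2.1 (A.filter_eq_univ hF.1 h)

theorem not_mem_both {F : Set D} (hF : A.IsPrimaryFilter F) {x : D}
    (h1 : x ∈ F) (h2 : A.neg x ∈ F) : False := by
  apply A.bot_not_mem hF
  rw [← A.ax9a x]
  exact hF.1.1 x h1 (A.neg x) h2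

theorem neg_mem_iff {F : Set D} (hF : A.IsPrimaryFilter F) {x : D} :
    A.neg x ∈ F ↔ x ∉ F :=
  ⟨fun h hx => A.not_mem_both hF hx h, fun h => (hF.2.2 x).resolve_left h⟩

theorem top_mem {F : Set D} (hF : A.IsPrimaryFilter F) : A.top ∈ F := by
  rcases hF.2.2 A.top with h | h
  · exact h
  · exfalso; apply A.bot_not_mem hF; rw [← A.ax11a]; exact h

theorem inf_mem_iff {F : Set D} (hF : A.IsPrimaryFilter F) {x y : D} :
    A.inf x y ∈ F ↔ x ∈ F ∧ y ∈ F :=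
  ⟨fun h => ⟨hF.1.2 _ h x (A.inf_le_left x y), hF.1.2 _ h y (A.inf_le_right x y)⟩,
   fun ⟨h1, h2⟩ => hF.1.1 x h1 y h2⟩

theorem vee_mem_iff {F : Set D} (hF : A.IsPrimaryFilter F) {x y : D} :
    A.vee x y ∈ F ↔ x ∈ F ∨ y ∈ F := by
  constructor
  · intro h
    by_contra hc
    push_neg at hc
    have hx := (A.neg_mem_iff hF).mpr hc.1
    have hy := (A.neg_mem_iff hF).mpr hc.2
    exact A.not_mem_both hF (hF.1.1 _ hx _ hy) h
  · intro h
    rcases hF.2.2 (A.vee x y) with hv | hv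
    · exact hv
    · exfalso
      have hv' : A.inf (A.neg x) (A.neg y) ∈ F := by
        rw [← A.ax8a (A.neg x) (A.neg y)]; exact hv
      rcases h with h | h
      · exact A.not_mem_both hF h ((A.inf_mem_iff hF).mp hv').1
      · exact A.not_mem_both hF h ((A.inf_mem_iff hF).mp hv').2

theorem isFilter_op {F : Set D} : A.op.IsFilter F ↔ A.IsIdeal F := by
  constructor
  · rintro ⟨h1, h2⟩
    exact ⟨h1, fun x hx z hz => h2 x hx z ((A.op_le).mpr hz)⟩
  · rintro ⟨h1, h2⟩
    exact ⟨h1, fun x hx z hz => h2 x hx z ((A.op_le).mp hz)⟩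

theorem isIdeal_op {F : Set D} : A.op.IsIdeal F ↔ A.IsFilter F := by
  constructor
  · rintro ⟨h1, h2⟩
    exact ⟨h1, fun x hx z hz => h2 x hx z ((A.op_le).mpr hz)⟩
  · rintro ⟨h1, h2⟩
    exact ⟨h1, fun x hx z hz => h2 x hx z ((A.op_le).mp hz)⟩

theorem isPrimaryFilter_op {F : Set D} : A.op.IsPrimaryFilter F ↔ A.IsPrimaryIdeal F := by
  constructor
  · rintro ⟨h1, h2, h3⟩; exact ⟨(A.isFilter_op).mp h1, h2, h3⟩
  · rintro ⟨h1, h2, h3⟩; exact ⟨(A.isFilter_op).mpr h1, h2, h3⟩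

theorem ideal_eq_univ {I : Set D} (hI : A.IsIdeal I) (h : A.top ∈ I) : I = Set.univ :=
  filter_eq_univ A.op ((A.isFilter_op).mpr hI) h

theorem top_not_mem {I : Set D} (hI : A.IsPrimaryIdeal I) : A.top ∉ I :=
  bot_not_mem A.op ((A.isPrimaryFilter_op).mpr hI)

theorem not_mem_both_ideal {I : Set D} (hI : A.IsPrimaryIdeal I) {x : D}
    (h1 : x ∈ I) (h2 : A.dneg x ∈ I) : False :=
  not_mem_both A.op ((A.isPrimaryFilter_op).mpr hI) h1 h2

theorem dneg_mem_iff {I : Set D} (hI : A.IsPrimaryIdeal I) {x : D} :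
    A.dneg x ∈ I ↔ x ∉ I :=
  neg_mem_iff A.op ((A.isPrimaryFilter_op).mpr hI)

theorem bot_mem {I : Set D} (hI : A.IsPrimaryIdeal I) : A.bot ∈ I :=
  top_mem A.op ((A.isPrimaryFilter_op).mpr hI)

theorem sup_mem_iff {I : Set D} (hI : A.IsPrimaryIdeal I) {x y : D} :
    A.sup x y ∈ I ↔ x ∈ I ∧ y ∈ I :=
  inf_mem_iff A.op ((A.isPrimaryFilter_op).mpr hI)

theorem wedge_mem_iff {I : Set D} (hI : A.IsPrimaryIdeal I) {x y : D} :
    A.wedge x y ∈ I ↔ x ∈ I ∨ y ∈ I :=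
  vee_mem_iff A.op ((A.isPrimaryFilter_op).mpr hI)

/-- The filter extension of `F` by `x`. -/
def fext (F : Set D) (x : D) : Set D := {z | ∃ f ∈ F, A.le (A.inf f x) z}

theorem subset_fext {F : Set D} (x : D) : F ⊆ A.fext F x :=
  fun f hf => ⟨f, hf, A.inf_le_left f x⟩

theorem mem_fext {F : Set D} (hne : F.Nonempty) (x : D) : x ∈ A.fext F x := by
  obtain ⟨f, hf⟩ := hne; exact ⟨f, hf, A.inf_le_right f x⟩

theorem le_fext_aux {f g x : D} : A.le (A.inf (A.inf f g) x) (A.inf f x) := by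
  apply A.le_of_inf_eq
  have h1 : A.inf (A.inf (A.inf f g) x) (A.inf f x)
      = A.inf (A.inf f f) (A.inf (A.inf x x) g) := by ac_rfl
  rw [h1, A.ax1a, A.ax1a]
  ac_rfl

theorem le_fext_aux' {f g x : D} : A.le (A.inf (A.inf f g) x) (A.inf g x) := by
  have h : A.inf (A.inf f g) x = A.inf (A.inf g f) x := by ac_rfl
  rw [h]; exact A.le_fext_aux

theorem fext_filter {F : Set D} (hF : A.IsFilter F) (x : D) : A.IsFilter (A.fext F x) := by
  constructor
  · rintro z ⟨f, hf, hz⟩ w ⟨g, hg, hw⟩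
    refine ⟨A.inf f g, hF.1 f hf g hg, ?_⟩
    exact A.le_inf (A.inf_idem2 _ _) (A.le_trans A.le_fext_aux hz) (A.le_trans A.le_fext_aux' hw)
  · rintro z ⟨f, hf, hz⟩ w hw
    exact ⟨f, hf, A.le_trans hz hw⟩

theorem chain_filter {c : Set (Set D)} (hc : ∀ G ∈ c, A.IsFilter G)
    (hchain : IsChain (· ⊆ ·) c) : A.IsFilter (⋃₀ c) := by
  constructor
  · rintro x ⟨s, hs, hxs⟩ y ⟨t, ht, hyt⟩
    rcases hchain.total hs ht with h | h
    · exact ⟨t, ht, (hc t ht).1 x (h hxs) y hyt⟩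
    · exact ⟨s, hs, (hc s hs).1 x hxs y (h hyt)⟩
  · rintro x ⟨s, hs, hxs⟩ z hz
    exact ⟨s, hs, (hc s hs).2 x hxs z hz⟩

theorem exists_primary_of_proper {F : Set D} (hF : A.IsFilter F) (hne : F.Nonempty)
    (hbot : A.bot ∉ F) : ∃ G, A.IsPrimaryFilter G ∧ F ⊆ G := by
  obtain ⟨G, hFG, hmax⟩ := zorn_subset_nonempty {G | A.IsFilter G ∧ A.bot ∉ G}
    (fun c hc hchain _hcne =>
      ⟨⋃₀ c, ⟨A.chain_filter (fun G hG => (hc hG).1) hchain,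
        fun ⟨s, hs, hbs⟩ => (hc hs).2 hbs⟩, fun s hs => subset_sUnion_of_mem hs⟩)
    F ⟨hF, hbot⟩
  have hGf : A.IsFilter G := hmax.prop.1
  have hGb : A.bot ∉ G := hmax.prop.2
  have hGne : G.Nonempty := hne.mono hFG
  refine ⟨G, ⟨hGf, ?_, ?_⟩, hFG⟩
  · intro hu; exact hGb (hu ▸ Set.mem_univ A.bot)
  · intro x
    by_contra hcon
    push_neg at hcon
    obtain ⟨hx, hnx⟩ := hcon
    have hbmem : ∀ y : D, y ∉ G → A.bot ∈ A.fext G y := by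
      intro y hy
      by_contra hb
      have heq := hmax.2 ⟨A.fext_filter hGf y, hb⟩ (A.subset_fext y)
      exact hy (heq (A.mem_fext hGne y))
    obtain ⟨f, hf, hfle⟩ := hbmem x hx
    obtain ⟨g, hg, hgle⟩ := hbmem (A.neg x) hnx
    have hfx : A.inf (A.inf f g) x = A.bot :=
      A.eq_bot_of_le_bot (A.inf_idem2 _ _) (A.le_trans A.le_fext_aux hfle)
    have hgx : A.inf (A.inf f g) (A.neg x) = A.bot :=
      A.eq_bot_of_le_bot (A.inf_idem2 _ _) (A.le_trans A.le_fext_aux' hgle)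
    apply hGb
    have hmem : A.inf f g ∈ G := hGf.1 f hf g hg
    have hh : A.inf (A.inf f g) (A.inf f g) ∈ G := hGf.1 _ hmem _ hmem
    have heq : A.inf (A.inf f g) (A.inf f g) = A.bot := by
      rw [← A.inf_vee_negself (A.inf f g) x, A.inf_vee, hfx, hgx, A.vee_bot_bot]
    rwa [heq] at hh

theorem exists_primary_disjoint {F I : Set D} (hF : A.IsFilter F) (hne : F.Nonempty)
    (hI : A.IsIdeal I) (hIne : I.Nonempty) (hdis : F ∩ I = ∅) :
    ∃ G, A.IsPrimaryFilter G ∧ F ⊆ G ∧ G ∩ I = ∅ := by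
  obtain ⟨G, hFG, hmax⟩ := zorn_subset_nonempty {G | A.IsFilter G ∧ G ∩ I = ∅}
    (fun c hc hchain _hcne => by
      refine ⟨⋃₀ c, ⟨A.chain_filter (fun G hG => (hc hG).1) hchain, ?_⟩,
        fun s hs => subset_sUnion_of_mem hs⟩
      apply Set.eq_empty_iff_forall_notMem.mpr
      rintro z ⟨⟨s, hs, hzs⟩, hzI⟩
      exact Set.eq_empty_iff_forall_notMem.mp (hc hs).2 z ⟨hzs, hzI⟩)
    F ⟨hF, hdis⟩
  have hGf : A.IsFilter G := hmax.prop.1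
  have hGdis : G ∩ I = ∅ := hmax.prop.2
  have hGne : G.Nonempty := hne.mono hFG
  refine ⟨G, ⟨hGf, ?_, ?_⟩, hFG, hGdis⟩
  · intro hu
    obtain ⟨i, hi⟩ := hIne
    exact Set.eq_empty_iff_forall_notMem.mp hGdis i ⟨hu ▸ Set.mem_univ i, hi⟩
  · intro x
    by_contra hcon
    push_neg at hcon
    obtain ⟨hx, hnx⟩ := hcon
    have hbad : ∀ y : D, y ∉ G → ∃ z ∈ I, ∃ f ∈ G, A.le (A.inf f y) z := by
      intro y hy
      by_contra hb
      push_neg at hb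
      have hdis' : A.fext G y ∩ I = ∅ := by
        apply Set.eq_empty_iff_forall_notMem.mpr
        rintro z ⟨⟨f, hf, hfz⟩, hzI⟩
        exact hb z hzI f hf hfz
      have heq := hmax.2 ⟨A.fext_filter hGf y, hdis'⟩ (A.subset_fext y)
      exact hy (heq (A.mem_fext hGne y))
    obtain ⟨z, hzI, f, hf, hfle⟩ := hbad x hx
    obtain ⟨w, hwI, g, hg, hgle⟩ := hbad (A.neg x) hnx
    have hhG : A.inf f g ∈ G := hGf.1 f hf g hg
    have hv : A.sup z w ∈ I := hI.1 z hzI w hwI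
    have h1 : A.le (A.inf (A.inf f g) x) (A.sup z w) :=
      A.le_trans A.le_fext_aux (A.le_trans hfle (A.le_sup_left z w))
    have h2 : A.le (A.inf (A.inf f g) (A.neg x)) (A.sup z w) :=
      A.le_trans A.le_fext_aux' (A.le_trans hgle (A.le_sup_right z w))
    have key : A.le (A.inf (A.inf f g) (A.inf f g)) (A.sup z w) := by
      have e : A.inf (A.inf f g) (A.inf f g)
          = A.vee (A.inf (A.inf f g) x) (A.inf (A.inf f g) (A.neg x)) := by
        rw [← A.inf_vee, A.inf_vee_negself]
      rw [e]
      exact A.vee_le (by rw [h1.1, A.inf_idem2]) (by rw [h2.1, A.inf_idem2])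
    have hvG : A.sup z w ∈ G := hGf.2 _ (hGf.1 _ hhG _ hhG) _ key
    exact Set.eq_empty_iff_forall_notMem.mp hGdis _ ⟨hvG, hv⟩

theorem exists_primaryIdeal_disjoint {I F : Set D} (hI : A.IsIdeal I) (hne : I.Nonempty)
    (hF : A.IsFilter F) (hFne : F.Nonempty) (hdis : I ∩ F = ∅) :
    ∃ J, A.IsPrimaryIdeal J ∧ I ⊆ J ∧ J ∩ F = ∅ := by
  obtain ⟨J, hJ, h1, h2⟩ := exists_primary_disjoint A.op ((A.isFilter_op).mpr hI) hne
    ((A.isIdeal_op).mpr hF) hFne hdis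
  exact ⟨J, (A.isPrimaryFilter_op).mp hJ, h1, h2⟩

/-- principal up-set -/
def upset (c : D) : Set D := {z | A.le c z}

theorem upset_filter {c : D} (hc : A.inf c c = c) : A.IsFilter (A.upset c) :=
  ⟨fun _x hx _y hy => A.le_inf hc hx hy, fun _x hx _z hz => A.le_trans hx hz⟩

theorem mem_upset_self (c : D) : c ∈ A.upset c := A.le_refl c

/-- principal down-set -/
def downset (c : D) : Set D := {z | A.le z c}

theorem downset_eq_op_upset (c : D) : A.downset c = A.op.upset c :=
  Set.ext fun _z => Iff.symm (A.op_le)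

theorem downset_ideal {c : D} (hc : A.sup c c = c) : A.IsIdeal (A.downset c) := by
  rw [A.downset_eq_op_upset]
  exact (A.isFilter_op).mp (upset_filter A.op hc)

theorem mem_downset_self (c : D) : c ∈ A.downset c := A.le_refl c

def listInf (l : List D) : D := l.foldr A.inf A.top

def cInf (l : List D) : D := A.inf (A.listInf l) (A.listInf l)

theorem cInf_idem (l : List D) : A.inf (A.cInf l) (A.cInf l) = A.cInf l :=
  A.inf_idem2 _ _

theorem cInf_le_listInf (l : List D) : A.le (A.cInf l) (A.listInf l) :=
  A.le_of_inf_eq (A.ax1a _ _)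

theorem le_double {a u : D} : A.le (A.inf a u) (A.inf u u) := by
  apply A.le_of_inf_eq
  have h : A.inf (A.inf a u) (A.inf u u) = A.inf (A.inf (A.inf u u) u) a := by ac_rfl
  rw [h, A.ax1a, A.ax1a]
  exact A.ax2a u a

theorem cInf_cons (a : D) (l : List D) :
    A.cInf (a :: l) = A.inf a (A.listInf l) := by
  show A.inf (A.inf a (A.listInf l)) (A.inf a (A.listInf l)) = _
  exact A.inf_idem2 _ _

theorem cInf_append_le_listInf (l₁ l₂ : List D) :
    A.le (A.cInf (l₁ ++ l₂)) (A.listInf l₂) := by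
  induction l₁ with
  | nil => exact A.cInf_le_listInf l₂
  | cons a l ih =>
    have h : A.cInf ((a :: l) ++ l₂) = A.inf a (A.listInf (l ++ l₂)) := A.cInf_cons a (l ++ l₂)
    rw [h]
    exact A.le_trans A.le_double ih

theorem cInf_append_le_right (l₁ l₂ : List D) : A.le (A.cInf (l₁ ++ l₂)) (A.cInf l₂) :=
  A.le_inf (A.cInf_idem _) (A.cInf_append_le_listInf l₁ l₂) (A.cInf_append_le_listInf l₁ l₂)

theorem cInf_append_le_left (l₁ l₂ : List D) : A.le (A.cInf (l₁ ++ l₂)) (A.cInf l₁) := by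
  induction l₁ with
  | nil => exact A.le_inf (A.cInf_idem l₂) (A.le_top _) (A.le_top _)
  | cons a l ih =>
    have h1 : A.cInf ((a :: l) ++ l₂) = A.inf a (A.listInf (l ++ l₂)) := A.cInf_cons a (l ++ l₂)
    have h2 : A.cInf (a :: l) = A.inf a (A.listInf l) := A.cInf_cons a l
    rw [h1, h2]
    apply A.le_inf (A.inf_idem2 _ _)
    · exact A.inf_le_left _ _
    · exact A.le_trans A.le_double (A.le_trans ih (A.cInf_le_listInf l))

theorem listInf_mem {F : Set D} (hF : A.IsPrimaryFilter F) :
    ∀ l : List D, (∀ a ∈ l, a ∈ F) → A.listInf l ∈ F := by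
  intro l
  induction l with
  | nil => intro _; exact A.top_mem hF
  | cons a t ih =>
    intro hmem
    exact hF.1.1 a (hmem a (List.mem_cons_self)) _
      (ih fun i hi => hmem i (List.mem_cons_of_mem a hi))

theorem fip {ι : Type w} (f : ι → D)
    (h : ∀ l : List ι, ∃ F, A.IsPrimaryFilter F ∧ ∀ i ∈ l, f i ∈ F) :
    ∃ F, A.IsPrimaryFilter F ∧ ∀ i, f i ∈ F := by
  have hfil : A.IsFilter {z | ∃ l : List ι, A.le (A.cInf (l.map f)) z} := by
    constructor
    · rintro x ⟨l₁, h₁⟩ y ⟨l₂, h₂⟩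
      refine ⟨l₁ ++ l₂, ?_⟩
      rw [List.map_append]
      exact A.le_inf (A.cInf_idem _)
        (A.le_trans (A.cInf_append_le_left _ _) h₁)
        (A.le_trans (A.cInf_append_le_right _ _) h₂)
    · rintro x ⟨l, hl⟩ z hz
      exact ⟨l, A.le_trans hl hz⟩
  have hne : Set.Nonempty {z | ∃ l : List ι, A.le (A.cInf (l.map f)) z} :=
    ⟨A.top, ⟨[], A.le_top _⟩⟩
  have hmem : ∀ i, f i ∈ {z | ∃ l : List ι, A.le (A.cInf (l.map f)) z} := by
    intro i
    refine ⟨[i], ?_⟩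
    have h1 : A.cInf ([i].map f) = A.inf (f i) (f i) := by
      show A.inf (A.inf (f i) A.top) (A.inf (f i) A.top) = _
      rw [A.inf_top, A.inf_idem2]
    rw [h1]
    exact A.le_of_inf_eq (A.ax1a (f i) (f i))
  have hnb : A.bot ∉ {z | ∃ l : List ι, A.le (A.cInf (l.map f)) z} := by
    rintro ⟨l, hl⟩
    have hc : A.cInf (l.map f) = A.bot := A.eq_bot_of_le_bot (A.cInf_idem _) hl
    obtain ⟨F, hF, hmemF⟩ := h l
    have hLmem : A.listInf (l.map f) ∈ F := A.listInf_mem hF _ (fun a ha => by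
      obtain ⟨i, hi, rfl⟩ := List.mem_map.mp ha
      exact hmemF i hi)
    have hcF : A.cInf (l.map f) ∈ F := hF.1.1 _ hLmem _ hLmem
    rw [hc] at hcF
    exact A.bot_not_mem hF hcF
  obtain ⟨G, hG, hSG⟩ := A.exists_primary_of_proper hfil hne hnb
  exact ⟨G, hG, fun i => hSG (hmem i)⟩

theorem fip_ideal {ι : Type w} (f : ι → D)
    (h : ∀ l : List ι, ∃ I, A.IsPrimaryIdeal I ∧ ∀ i ∈ l, f i ∈ I) :
    ∃ I, A.IsPrimaryIdeal I ∧ ∀ i, f i ∈ I := by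
  obtain ⟨I, hI, hm⟩ := fip A.op f (fun l => by
    obtain ⟨I, hI, hm⟩ := h l
    exact ⟨I, (A.isPrimaryFilter_op).mpr hI, hm⟩)
  exact ⟨I, (A.isPrimaryFilter_op).mp hI, hm⟩

end DBA


section Stmt15Top

open Set

variable {D : Type u} (A : DBA D)

theorem Fset_eq_compl (x : D) : Fset A x = (Fset A (A.neg x))ᶜ := by
  ext F
  show x ∈ F.val ↔ ¬ A.neg x ∈ F.val
  rw [A.neg_mem_iff F.prop, not_not]

theorem Fset_compl (x : D) : (Fset A x)ᶜ = Fset A (A.neg x) := by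
  rw [Fset_eq_compl A x, compl_compl]

theorem Fset_inf (x y : D) : Fset A (A.inf x y) = Fset A x ∩ Fset A y := by
  ext F
  exact A.inf_mem_iff F.prop

theorem Fset_vee (x y : D) : Fset A (A.vee x y) = Fset A x ∪ Fset A y := by
  ext F
  exact A.vee_mem_iff F.prop

theorem isOpen_Fset (x : D) : @IsOpen (PrimF A) (filtTop A) (Fset A x) :=
  TopologicalSpace.isOpen_generateFrom_of_mem ⟨A.neg x, Fset_eq_compl A x⟩

theorem isClosed_Fset (x : D) : @IsClosed (PrimF A) (filtTop A) (Fset A x) := by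
  letI := filtTop A
  rw [← isOpen_compl_iff, Fset_compl]
  exact isOpen_Fset A (A.neg x)

theorem isClopen_Fset (x : D) : @IsClopen (PrimF A) (filtTop A) (Fset A x) :=
  ⟨isClosed_Fset A x, isOpen_Fset A x⟩

theorem negbot_mem_Fset (F : PrimF A) : F ∈ Fset A (A.neg A.bot) := by
  show A.neg A.bot ∈ F.val
  rw [A.ax10a]
  exact F.prop.1.1 _ (A.top_mem F.prop) _ (A.top_mem F.prop)

theorem exists_Fset_subset {U : Set (PrimF A)} (hU : @IsOpen (PrimF A) (filtTop A) U)
    {F : PrimF A} (hF : F ∈ U) : ∃ y, F ∈ Fset A y ∧ Fset A y ⊆ U := by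
  have hU' : TopologicalSpace.GenerateOpen {U | ∃ x : D, U = (Fset A x)ᶜ} U := hU
  clear hU
  revert hF
  induction hU' with
  | basic s hs =>
    intro hF
    obtain ⟨x, rfl⟩ := hs
    refine ⟨A.neg x, ?_, ?_⟩
    · rwa [Fset_compl] at hF
    · rw [Fset_compl]
  | univ =>
    intro _
    exact ⟨A.neg A.bot, negbot_mem_Fset A F, Set.subset_univ _⟩
  | inter u v _hu _hv ihu ihv =>
    intro hF
    obtain ⟨y₁, hy₁, hy₁s⟩ := ihu hF.1
    obtain ⟨y₂, hy₂, hy₂s⟩ := ihv hF.2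
    refine ⟨A.inf y₁ y₂, ?_, ?_⟩
    · rw [Fset_inf]; exact ⟨hy₁, hy₂⟩
    · rw [Fset_inf]; exact Set.inter_subset_inter hy₁s hy₂s
  | sUnion S _hS ih =>
    intro hF
    obtain ⟨s, hsS, hFs⟩ := hF
    obtain ⟨y, hy, hys⟩ := ih s hsS hFs
    exact ⟨y, hy, hys.trans (Set.subset_sUnion_of_mem hsS)⟩

theorem veeList_mem {F : Set D} (hF : A.IsPrimaryFilter F) :
    ∀ l : List D, (l.foldr A.vee A.bot ∈ F ↔ ∃ y ∈ l, y ∈ F) := by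
  intro l
  induction l with
  | nil =>
    simp only [List.foldr_nil, List.not_mem_nil, false_and, exists_false, iff_false]
    exact A.bot_not_mem hF
  | cons a t ih =>
    show A.vee a (t.foldr A.vee A.bot) ∈ F ↔ _
    rw [A.vee_mem_iff hF, ih]
    constructor
    · rintro (h | ⟨y, hy, hyF⟩)
      exacts [⟨a, List.mem_cons_self, h⟩, ⟨y, List.mem_cons_of_mem a hy, hyF⟩]
    · rintro ⟨y, hy, hyF⟩
      rcases List.mem_cons.mp hy with rfl | hy
      exacts [Or.inl hyF, Or.inr ⟨y, hy, hyF⟩]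

theorem clopen_eq_Fset {U : Set (PrimF A)} (hU : @IsClopen (PrimF A) (filtTop A) U) :
    ∃ a, U = Fset A a := by
  classical
  have key : ¬ ∃ F₀, A.IsPrimaryFilter F₀ ∧
      ∀ i : {y : D // Fset A y ⊆ U ∨ Fset A y ⊆ Uᶜ}, A.neg i.val ∈ F₀ := by
    rintro ⟨F₀, hF₀, hall⟩
    rcases Classical.em ((⟨F₀, hF₀⟩ : PrimF A) ∈ U) with h | h
    · obtain ⟨y, hy1, hy2⟩ := exists_Fset_subset A hU.2 h
      exact A.not_mem_both hF₀ hy1 (hall ⟨y, Or.inl hy2⟩)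
    · obtain ⟨y, hy1, hy2⟩ := exists_Fset_subset A hU.1.isOpen_compl h
      exact A.not_mem_both hF₀ hy1 (hall ⟨y, Or.inr hy2⟩)
  have hl : ¬ ∀ l : List {y : D // Fset A y ⊆ U ∨ Fset A y ⊆ Uᶜ},
      ∃ F, A.IsPrimaryFilter F ∧ ∀ i ∈ l, A.neg i.val ∈ F := by
    intro hc
    obtain ⟨F, hF, hmem⟩ := A.fip (fun i : {y : D // Fset A y ⊆ U ∨ Fset A y ⊆ Uᶜ} =>
      A.neg i.val) hc
    exact key ⟨F, hF, fun i => hmem i⟩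
  obtain ⟨l, hl⟩ := not_forall.mp hl
  refine ⟨((l.map Subtype.val).filter (fun y => decide (Fset A y ⊆ U))).foldr A.vee A.bot, ?_⟩
  ext F
  constructor
  · intro hFU
    have hex : ¬ ∀ i ∈ l, A.neg i.val ∈ F.val := fun hc => hl ⟨F.val, F.prop, hc⟩
    push_neg at hex
    obtain ⟨i, hil, hni⟩ := hex
    have hiF : i.val ∈ F.val := (F.prop.2.2 i.val).resolve_right hni
    rcases i.prop with hsub | hsub
    · refine (veeList_mem A F.prop _).mpr ⟨i.val, ?_, hiF⟩
      exact List.mem_filter.mpr ⟨List.mem_map_of_mem hil, decide_eq_true hsub⟩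
    · exact absurd hFU (hsub hiF)
  · intro hFa
    obtain ⟨y, hyl, hyF⟩ := (veeList_mem A F.prop _).mp hFa
    have hsub : Fset A y ⊆ U := of_decide_eq_true (List.mem_filter.mp hyl).2
    exact hsub hyF

theorem Iset_eq_compl (x : D) : Iset A x = (Iset A (A.dneg x))ᶜ := by
  ext I
  show x ∈ I.val ↔ ¬ A.dneg x ∈ I.val
  rw [A.dneg_mem_iff I.prop, not_not]

theorem Iset_compl (x : D) : (Iset A x)ᶜ = Iset A (A.dneg x) := by
  rw [Iset_eq_compl A x, compl_compl]

theorem Iset_sup (x y : D) : Iset A (A.sup x y) = Iset A x ∩ Iset A y := by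
  ext I
  exact A.sup_mem_iff I.prop

theorem Iset_wedge (x y : D) : Iset A (A.wedge x y) = Iset A x ∪ Iset A y := by
  ext I
  exact A.wedge_mem_iff I.prop

theorem isOpen_Iset (x : D) : @IsOpen (PrimI A) (idlTop A) (Iset A x) :=
  TopologicalSpace.isOpen_generateFrom_of_mem ⟨A.dneg x, Iset_eq_compl A x⟩

theorem isClosed_Iset (x : D) : @IsClosed (PrimI A) (idlTop A) (Iset A x) := by
  letI := idlTop A
  rw [← isOpen_compl_iff, Iset_compl]
  exact isOpen_Iset A (A.dneg x)

theorem isClopen_Iset (x : D) : @IsClopen (PrimI A) (idlTop A) (Iset A x) :=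
  ⟨isClosed_Iset A x, isOpen_Iset A x⟩

theorem dnegtop_mem_Iset (I : PrimI A) : I ∈ Iset A (A.dneg A.top) := by
  show A.dneg A.top ∈ I.val
  rw [A.ax10b]
  exact I.prop.1.1 _ (A.bot_mem I.prop) _ (A.bot_mem I.prop)

theorem exists_Iset_subset {U : Set (PrimI A)} (hU : @IsOpen (PrimI A) (idlTop A) U)
    {I : PrimI A} (hI : I ∈ U) : ∃ y, I ∈ Iset A y ∧ Iset A y ⊆ U := by
  have hU' : TopologicalSpace.GenerateOpen {U | ∃ x : D, U = (Iset A x)ᶜ} U := hU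
  clear hU
  revert hI
  induction hU' with
  | basic s hs =>
    intro hI
    obtain ⟨x, rfl⟩ := hs
    refine ⟨A.dneg x, ?_, ?_⟩
    · rwa [Iset_compl] at hI
    · rw [Iset_compl]
  | univ =>
    intro _
    exact ⟨A.dneg A.top, dnegtop_mem_Iset A I, Set.subset_univ _⟩
  | inter u v _hu _hv ihu ihv =>
    intro hI
    obtain ⟨y₁, hy₁, hy₁s⟩ := ihu hI.1
    obtain ⟨y₂, hy₂, hy₂s⟩ := ihv hI.2
    refine ⟨A.sup y₁ y₂, ?_, ?_⟩
    · rw [Iset_sup]; exact ⟨hy₁, hy₂⟩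
    · rw [Iset_sup]; exact Set.inter_subset_inter hy₁s hy₂s
  | sUnion S _hS ih =>
    intro hI
    obtain ⟨s, hsS, hIs⟩ := hI
    obtain ⟨y, hy, hys⟩ := ih s hsS hIs
    exact ⟨y, hy, hys.trans (Set.subset_sUnion_of_mem hsS)⟩

theorem wedgeList_mem {I : Set D} (hI : A.IsPrimaryIdeal I) :
    ∀ l : List D, (l.foldr A.wedge A.top ∈ I ↔ ∃ y ∈ l, y ∈ I) := by
  intro l
  induction l with
  | nil =>
    simp only [List.foldr_nil, List.not_mem_nil, false_and, exists_false, iff_false]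
    exact A.top_not_mem hI
  | cons a t ih =>
    show A.wedge a (t.foldr A.wedge A.top) ∈ I ↔ _
    rw [A.wedge_mem_iff hI, ih]
    constructor
    · rintro (h | ⟨y, hy, hyI⟩)
      exacts [⟨a, List.mem_cons_self, h⟩, ⟨y, List.mem_cons_of_mem a hy, hyI⟩]
    · rintro ⟨y, hy, hyI⟩
      rcases List.mem_cons.mp hy with rfl | hy
      exacts [Or.inl hyI, Or.inr ⟨y, hy, hyI⟩]

theorem clopen_eq_Iset {U : Set (PrimI A)} (hU : @IsClopen (PrimI A) (idlTop A) U) :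
    ∃ b, U = Iset A b := by
  classical
  have key : ¬ ∃ I₀, A.IsPrimaryIdeal I₀ ∧
      ∀ i : {y : D // Iset A y ⊆ U ∨ Iset A y ⊆ Uᶜ}, A.dneg i.val ∈ I₀ := by
    rintro ⟨I₀, hI₀, hall⟩
    rcases Classical.em ((⟨I₀, hI₀⟩ : PrimI A) ∈ U) with h | h
    · obtain ⟨y, hy1, hy2⟩ := exists_Iset_subset A hU.2 h
      exact A.not_mem_both_ideal hI₀ hy1 (hall ⟨y, Or.inl hy2⟩)
    · obtain ⟨y, hy1, hy2⟩ := exists_Iset_subset A hU.1.isOpen_compl h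
      exact A.not_mem_both_ideal hI₀ hy1 (hall ⟨y, Or.inr hy2⟩)
  have hl : ¬ ∀ l : List {y : D // Iset A y ⊆ U ∨ Iset A y ⊆ Uᶜ},
      ∃ I, A.IsPrimaryIdeal I ∧ ∀ i ∈ l, A.dneg i.val ∈ I := by
    intro hc
    obtain ⟨I, hI, hmem⟩ := A.fip_ideal (fun i : {y : D // Iset A y ⊆ U ∨ Iset A y ⊆ Uᶜ} =>
      A.dneg i.val) hc
    exact key ⟨I, hI, fun i => hmem i⟩
  obtain ⟨l, hl⟩ := not_forall.mp hl
  refine ⟨((l.map Subtype.val).filter (fun y => decide (Iset A y ⊆ U))).foldr A.wedge A.top, ?_⟩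
  ext I
  constructor
  · intro hIU
    have hex : ¬ ∀ i ∈ l, A.dneg i.val ∈ I.val := fun hc => hl ⟨I.val, I.prop, hc⟩
    push_neg at hex
    obtain ⟨i, hil, hni⟩ := hex
    have hiI : i.val ∈ I.val := (I.prop.2.2 i.val).resolve_right hni
    rcases i.prop with hsub | hsub
    · refine (wedgeList_mem A I.prop _).mpr ⟨i.val, ?_, hiI⟩
      exact List.mem_filter.mpr ⟨List.mem_map_of_mem hil, decide_eq_true hsub⟩
    · exact absurd hIU (hsub hiI)
  · intro hIa
    obtain ⟨y, hyl, hyI⟩ := (wedgeList_mem A I.prop _).mp hIa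
    have hsub : Iset A y ⊆ U := of_decide_eq_true (List.mem_filter.mp hyl).2
    exact hsub hyI

theorem obbox_Fset (a : D) : obbox (nabla A) (Fset A a) = Iset A (A.neg a) := by
  ext I
  constructor
  · intro h
    by_contra hna
    have hdis : A.upset (A.neg a) ∩ I.val = ∅ := by
      apply Set.eq_empty_iff_forall_notMem.mpr
      rintro z ⟨hz1, hz2⟩
      exact hna (I.prop.1.2 z hz2 _ hz1)
    obtain ⟨G, hG, hsub, hdisG⟩ := A.exists_primary_disjoint
      (A.upset_filter (A.neg_idem a)) ⟨_, A.mem_upset_self _⟩ I.prop.1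
      ⟨A.bot, A.bot_mem I.prop⟩ hdis
    have haG : a ∈ G := h ⟨G, hG⟩ hdisG
    exact A.not_mem_both hG haG (hsub (A.mem_upset_self _))
  · intro hna F hFI
    rcases F.prop.2.2 a with h | h
    · exact h
    · exact (Set.eq_empty_iff_forall_notMem.mp hFI (A.neg a) ⟨h, hna⟩).elim

theorem odia_Iset (b : D) : odia (nabla A) (Iset A b) = (Fset A (A.sup b b))ᶜ := by
  ext F
  constructor
  · rintro ⟨I, hbI, hFI⟩
    show A.sup b b ∉ F.val
    intro hs
    have hsI : A.sup b b ∈ I.val := I.prop.1.1 b hbI b hbI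
    exact Set.eq_empty_iff_forall_notMem.mp hFI _ ⟨hs, hsI⟩
  · intro hs
    have hdis : A.downset (A.sup b b) ∩ F.val = ∅ := by
      apply Set.eq_empty_iff_forall_notMem.mpr
      rintro z ⟨hz1, hz2⟩
      exact hs (F.prop.1.2 z hz2 _ hz1)
    obtain ⟨J, hJ, hsub, hdisJ⟩ := A.exists_primaryIdeal_disjoint
      (A.downset_ideal (A.sup_idem2 b b)) ⟨_, A.mem_downset_self _⟩ F.prop.1
      ⟨A.top, A.top_mem F.prop⟩ hdis
    refine ⟨⟨J, hJ⟩, hsub (A.le_sup_left b b), ?_⟩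
    show F.val ∩ J = ∅
    rw [Set.inter_comm]
    exact hdisJ

theorem odia_obbox_subset {G : Type v₁} {M : Type v₂} (R : G → M → Prop) (A₀ : Set G) :
    odia R (obbox R A₀) ⊆ A₀ := by
  rintro g ⟨m, hm, hR⟩
  exact hm g hR

theorem subset_obbox_odia {G : Type v₁} {M : Type v₂} (R : G → M → Prop) (B : Set M) :
    B ⊆ obbox R (odia R B) :=
  fun m hm g hR => ⟨m, hm, hR⟩

theorem odia_mono {G : Type v₁} {M : Type v₂} (R : G → M → Prop) {B₁ B₂ : Set M}
    (h : B₁ ⊆ B₂) : odia R B₁ ⊆ odia R B₂ := by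
  rintro g ⟨m, hm, hR⟩
  exact ⟨m, h hm, hR⟩

theorem odia_obbox_odia {G : Type v₁} {M : Type v₂} (R : G → M → Prop) (B : Set M) :
    odia R (obbox R (odia R B)) = odia R B :=
  Set.Subset.antisymm (odia_obbox_subset R _) (odia_mono R (subset_obbox_odia R B))

end Stmt15Top

end Stmt15Aux

/-- Characterization theorem: (A,B) is a clopen object oriented
protoconcept of K^T_pr(D) with (A,B)⊓(A,B) = (A,B) or (A,B)⊔(A,B) = (A,B) iff
(A,B) = (F_{¬x}, I_x) for some x ∈ D_p; moreover x ∈ D_⊓ in the ⊓-idempotent case and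
x ∈ D_⊔ in the ⊔-idempotent case. -/
theorem stmt15 {D : Type u} (A : DBA D) (p : Set (PrimF A) × Set (PrimI A)) :
    ((@IsClopenProto (PrimF A) (PrimI A) (filtTop A) (idlTop A) (nabla A) p ∧
        (pinf (nabla A) p p = p ∨ psup (nabla A) p p = p)) ↔
      (∃ x ∈ A.Dp, p = (Fset A (A.neg x), Iset A x))) ∧
    (@IsClopenProto (PrimF A) (PrimI A) (filtTop A) (idlTop A) (nabla A) p →
      pinf (nabla A) p p = p →
      ∃ x, A.inf x x = x ∧ p = (Fset A (A.neg x), Iset A x)) ∧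
    (@IsClopenProto (PrimF A) (PrimI A) (filtTop A) (idlTop A) (nabla A) p →
      psup (nabla A) p p = p →
      ∃ x, A.sup x x = x ∧ p = (Fset A (A.neg x), Iset A x)) := by
    classical
  have e1 : pinf (nabla A) p p = (p.1, obbox (nabla A) p.1) := by
    show (p.1 ∪ p.1, obbox (nabla A) (p.1 ∪ p.1)) = _
    rw [Set.union_self]
  have e2 : psup (nabla A) p p = (odia (nabla A) p.2, p.2) := by
    show (odia (nabla A) (p.2 ∩ p.2), p.2 ∩ p.2) = _
    rw [Set.inter_self]
  have hpinf : pinf (nabla A) p p = p ↔ obbox (nabla A) p.1 = p.2 := by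
    rw [e1]
    constructor
    · intro h; exact congrArg Prod.snd h
    · intro h; rw [h]
  have hpsup : psup (nabla A) p p = p ↔ odia (nabla A) p.2 = p.1 := by
    rw [e2]
    constructor
    · intro h; exact congrArg Prod.fst h
    · intro h; rw [h]
  have part2 : @IsClopenProto (PrimF A) (PrimI A) (filtTop A) (idlTop A) (nabla A) p →
      pinf (nabla A) p p = p →
      ∃ x, A.inf x x = x ∧ p = (Fset A (A.neg x), Iset A x) := by
    intro hcp hidem
    obtain ⟨a, ha⟩ := clopen_eq_Fset A hcp.2.1
    refine ⟨A.neg a, A.neg_idem a, ?_⟩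
    have hB : p.2 = Iset A (A.neg a) := by
      rw [← hpinf.mp hidem, ha, obbox_Fset]
    have hA : p.1 = Fset A (A.neg (A.neg a)) := by
      rw [ha, A.neg_neg, Fset_inf, Set.inter_self]
    rw [← hA, ← hB]
  have part3 : @IsClopenProto (PrimF A) (PrimI A) (filtTop A) (idlTop A) (nabla A) p →
      psup (nabla A) p p = p →
      ∃ x, A.sup x x = x ∧ p = (Fset A (A.neg x), Iset A x) := by
    intro hcp hidem
    obtain ⟨b, hb⟩ := clopen_eq_Iset A hcp.2.2
    refine ⟨A.sup b b, A.sup_idem2 b b, ?_⟩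
    have hA : p.1 = Fset A (A.neg (A.sup b b)) := by
      rw [← hpsup.mp hidem, hb, odia_Iset, Fset_compl]
    have hB : p.2 = Iset A (A.sup b b) := by
      rw [hb, Iset_sup, Set.inter_self]
    rw [← hA, ← hB]
  refine ⟨⟨?_, ?_⟩, part2, part3⟩
  · rintro ⟨hcp, hidem | hidem⟩
    · obtain ⟨x, hx, hp⟩ := part2 hcp hidem
      exact ⟨x, Or.inl hx, hp⟩
    · obtain ⟨x, hx, hp⟩ := part3 hcp hidem
      exact ⟨x, Or.inr hx, hp⟩
  · rintro ⟨x, hx, hp⟩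
    have hp1 : p.1 = Fset A (A.neg x) := by rw [hp]
    have hp2 : p.2 = Iset A x := by rw [hp]
    rcases hx with hx | hx
    · have hBA : obbox (nabla A) (Fset A (A.neg x)) = Iset A x := by
        rw [obbox_Fset, A.neg_neg, hx]
      refine ⟨⟨?_, ?_, ?_⟩, Or.inl ?_⟩
      · show odia (nabla A) (obbox (nabla A) p.1) = odia (nabla A) p.2
        rw [hp1, hp2, hBA]
      · rw [hp1]; exact isClopen_Fset A (A.neg x)
      · rw [hp2]; exact isClopen_Iset A x
      · exact hpinf.mpr (by rw [hp1, hp2]; exact hBA)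
    · have hAB : odia (nabla A) (Iset A x) = Fset A (A.neg x) := by
        rw [odia_Iset, hx, Fset_compl]
      refine ⟨⟨?_, ?_, ?_⟩, Or.inr ?_⟩
      · show odia (nabla A) (obbox (nabla A) p.1) = odia (nabla A) p.2
        rw [hp1, hp2, ← hAB]
        exact odia_obbox_odia (nabla A) (Iset A x)
      · rw [hp1]; exact isClopen_Fset A (A.neg x)
      · rw [hp2]; exact isClopen_Iset A x
      · exact hpsup.mpr (by rw [hp1, hp2]; exact hAB)
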